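/- No f-generated implication satisfies the functional equation (IE). That is, if f : [0,1] → [0,∞] is a strictly decreasing continuous function with f(1) = 0 and I_f(x,y) = f⁻¹(x · f(y)) (with the convention 0 · ∞ = 0), then there exist x, y ∈ [0,1] such that I_f(I_f(y,x), I_f(x,y)) ≠ I_f(x,y). -/

import Mathlib

open Set
open scoped ENNReal

/-- No f-generated implication satisfies (IE): if `f : [0,1] → [0,∞]` is a
strictly decreasing continuous function with `f 1 = 0`, `finv` is its inverse, and
`I x y = f⁻¹ (x * f y)` (with the convention `0 * ∞ = 0`, as in `ℝ≥0∞`), then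
there are `x, y ∈ [0,1]` with `I (I y x) (I x y) ≠ I x y`. -/
theorem stmt_9 (f : ℝ → ℝ≥0∞)
    (hcont : ContinuousOn f (Icc (0:ℝ) 1))
    (hanti : StrictAntiOn f (Icc (0:ℝ) 1))
    (hf1 : f 1 = 0)
    (finv : ℝ≥0∞ → ℝ)
    (hfinv : ∀ x ∈ Icc (0:ℝ) 1, finv (f x) = x)
    (I : ℝ → ℝ → ℝ)
    (hI : ∀ x y, I x y = finv (ENNReal.ofReal x * f y)) :
    ∃ x ∈ Icc (0:ℝ) 1, ∃ y ∈ Icc (0:ℝ) 1, I (I y x) (I x y) ≠ I x y := by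
  have hhalf : (1/2 : ℝ) ∈ Icc (0:ℝ) 1 := by constructor <;> norm_num
  have hquarter : (1/4 : ℝ) ∈ Icc (0:ℝ) 1 := by constructor <;> norm_num
  have h1 : (1:ℝ) ∈ Icc (0:ℝ) 1 := by constructor <;> norm_num
  set c := f (1/2) with hc
  have hc0 : 0 < c := by
    have := hanti hhalf h1 (by norm_num)
    rw [hf1] at this; exact this
  have hctop : c < ⊤ := lt_of_lt_of_le (hanti hquarter hhalf (by norm_num)) le_top
  set a : ℝ≥0∞ := ENNReal.ofReal (1/2) * c with ha
  have ha0 : 0 < a := by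
    apply ENNReal.mul_pos
    · simp [ENNReal.ofReal_eq_zero]
    · exact hc0.ne'
  have halt : a < c := by
    calc a < 1 * c := by
            rw [ha]
            rw [mul_comm _ c, mul_comm (1:ℝ≥0∞) c]
            apply ENNReal.mul_lt_mul_right hc0.ne' hctop.ne
            rw [show (1:ℝ≥0∞) = ENNReal.ofReal 1 by simp]
            exact ENNReal.ofReal_lt_ofReal_iff_of_nonneg (by norm_num) |>.mpr (by norm_num)
      _ = c := one_mul c
  -- IVT on [1/2, 1] to get u with f u = a
  have hsub : Icc (1/2 : ℝ) 1 ⊆ Icc (0:ℝ) 1 := Icc_subset_Icc (by norm_num) le_rfl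
  have hivt := intermediate_value_Icc' (by norm_num : (1/2:ℝ) ≤ 1) (hcont.mono hsub)
  have hamem : a ∈ Icc (f 1) (f (1/2)) := ⟨by rw [hf1]; exact zero_le, le_of_lt halt⟩
  obtain ⟨u, humem, hfu⟩ := hivt hamem
  have hu01 : u ∈ Icc (0:ℝ) 1 := hsub humem
  have hu1 : u < 1 := by
    rcases lt_or_eq_of_le humem.2 with h | h
    · exact h
    · exfalso; rw [h, hf1] at hfu; exact ha0.ne' hfu.symm
  have hu0 : 0 < u := lt_of_lt_of_le (by norm_num) humem.1
  set b : ℝ≥0∞ := ENNReal.ofReal u * a with hb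
  have hatop : a < ⊤ := lt_of_lt_of_le halt hctop.le
  have hb0 : 0 < b := by
    apply ENNReal.mul_pos
    · simp [ENNReal.ofReal_eq_zero]; exact hu0
    · exact ha0.ne'
  have hblt : b < a := by
    calc b < 1 * a := by
            rw [hb]
            rw [mul_comm _ a, mul_comm (1:ℝ≥0∞) a]
            apply ENNReal.mul_lt_mul_right ha0.ne' hatop.ne
            rw [show (1:ℝ≥0∞) = ENNReal.ofReal 1 by simp]
            exact ENNReal.ofReal_lt_ofReal_iff_of_nonneg hu0.le |>.mpr hu1
      _ = a := one_mul a
  -- IVT on [u, 1] to get w with f w = b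
  have hsub2 : Icc u 1 ⊆ Icc (0:ℝ) 1 := Icc_subset_Icc hu01.1 le_rfl
  have hivt2 := intermediate_value_Icc' hu01.2 (hcont.mono hsub2)
  have hbmem : b ∈ Icc (f 1) (f u) := by
    rw [hf1, hfu]; exact ⟨zero_le, hblt.le⟩
  obtain ⟨w, hwmem, hfw⟩ := hivt2 hbmem
  have hw01 : w ∈ Icc (0:ℝ) 1 := hsub2 hwmem
  have hwu : w ≠ u := by
    intro h
    rw [h, hfu] at hfw
    exact hblt.ne' hfw
  -- compute I (1/2) (1/2)
  have hIhalf : I (1/2) (1/2) = u := by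
    rw [hI, ← hc, ← ha, ← hfu, hfinv u hu01]
  refine ⟨1/2, hhalf, 1/2, hhalf, ?_⟩
  rw [hIhalf]
  have : I u u = w := by
    rw [hI, hfu, ← hb, ← hfw, hfinv w hw01]
  rw [this]
  exact hwu
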